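/- Let D ∈ (0,1) and let L = (ℓ_j)_{j≥1} be a fractal string whose spectral counting function satisfies N_ν(x) = W(x) − C x^D + o(x^D) as x → +∞ for some nonzero real constant C. Then L is Minkowski nondegenerate of dimension D; that is, 0 < M_{*,D} ≤ M*_D < ∞, and in particular the Minkowski dimension of L equals D. -/

import Mathlib

open Filter Topology

/-- A fractal string: a nonincreasing, positive, summable sequence of lengths
`ℓ 0 ≥ ℓ 1 ≥ ⋯ > 0` (indexed from `0`, representing `ℓ_1, ℓ_2, …`). -/
def IsFractalString (ℓ : ℕ → ℝ) : Prop :=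
  (∀ j, 0 < ℓ j) ∧ Antitone ℓ ∧ Summable ℓ

/-- The volume `V(ε) = ∑ⱼ min(ℓⱼ, 2ε)` of the inner ε-neighborhood of the boundary. -/
noncomputable def stringVol (ℓ : ℕ → ℝ) (ε : ℝ) : ℝ :=
  ∑' j, min (ℓ j) (2 * ε)

/-- Upper `d`-dimensional Minkowski content `limsup_{ε→0⁺} V(ε)/ε^{1-d}`. -/
noncomputable def upperContent (ℓ : ℕ → ℝ) (d : ℝ) : ENNReal :=
  Filter.limsup (fun ε : ℝ => ENNReal.ofReal (stringVol ℓ ε / ε ^ (1 - d))) (𝓝[>] 0)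

/-- Lower `d`-dimensional Minkowski content `liminf_{ε→0⁺} V(ε)/ε^{1-d}`. -/
noncomputable def lowerContent (ℓ : ℕ → ℝ) (d : ℝ) : ENNReal :=
  Filter.liminf (fun ε : ℝ => ENNReal.ofReal (stringVol ℓ ε / ε ^ (1 - d))) (𝓝[>] 0)

/-- The Minkowski dimension `D = inf {d ≥ 0 : M*_d < ∞}`. -/
noncomputable def minkDim (ℓ : ℕ → ℝ) : ℝ :=
  sInf {d : ℝ | 0 ≤ d ∧ upperContent ℓ d < ⊤}

/-- The spectral (frequency) counting function `N_ν(x) = ∑ⱼ ⌊ℓⱼ x⌋`. -/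
noncomputable def spectralCount (ℓ : ℕ → ℝ) (x : ℝ) : ℝ :=
  ∑' j, (⌊ℓ j * x⌋₊ : ℝ)

/-- The Weyl term `W(x) = (∑ⱼ ℓⱼ) x`. -/
noncomputable def weylTerm (ℓ : ℕ → ℝ) (x : ℝ) : ℝ :=
  (∑' j, ℓ j) * x

/-- The geometric counting function `N_L(x) = #{j ≥ 1 : ℓⱼ⁻¹ ≤ x}`. -/
noncomputable def geomCount (ℓ : ℕ → ℝ) (x : ℝ) : ℝ :=
  (({j : ℕ | (ℓ j)⁻¹ ≤ x}).ncard : ℝ)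

/-- The "asymptotic second term" `φ_ν(x) = W(x) - N_ν(x)`. -/
noncomputable def phiNu (ℓ : ℕ → ℝ) (x : ℝ) : ℝ :=
  weylTerm ℓ x - spectralCount ℓ x

/-- `L` is Minkowski measurable (in dimension `D`) with Minkowski content `M`:
`V(ε)/ε^{1-D} → M` as `ε → 0⁺`. -/
def MinkMeasurableWith (ℓ : ℕ → ℝ) (D M : ℝ) : Prop :=
  Tendsto (fun ε : ℝ => stringVol ℓ ε / ε ^ (1 - D)) (𝓝[>] (0:ℝ)) (𝓝 M)

/-- `L` is Minkowski measurable in dimension `D` (with some positive finite content). -/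
def MinkMeasurable (ℓ : ℕ → ℝ) (D : ℝ) : Prop :=
  ∃ M : ℝ, 0 < M ∧ MinkMeasurableWith ℓ D M

/-- Hypothesis (6.1): `N_ν(x) = W(x) - C x^D + o(x^D)` as `x → +∞`. -/
def SpectralAsymp (ℓ : ℕ → ℝ) (D C : ℝ) : Prop :=
  Tendsto (fun x : ℝ => (spectralCount ℓ x - (weylTerm ℓ x - C * x ^ D)) / x ^ D)
    atTop (𝓝 0)

/-- The inverse spectral problem `(ISP)_D`: every fractal string of Minkowski
dimension `D` satisfying (6.1) is Minkowski measurable. -/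
def ISP (D : ℝ) : Prop :=
  ∀ ℓ : ℕ → ℝ, IsFractalString ℓ → minkDim ℓ = D →
    (∃ C : ℝ, C ≠ 0 ∧ SpectralAsymp ℓ D C) → MinkMeasurable ℓ D

lemma frac_nonneg' {u : ℝ} (hu : 0 ≤ u) : 0 ≤ u - ⌊u⌋₊ := by
  have := Nat.floor_le hu; linarith

lemma frac_le_one' (u : ℝ) : u - ⌊u⌋₊ ≤ 1 := by
  have := Nat.lt_floor_add_one u; linarith

lemma phiNu_eq_tsum (ℓ : ℕ → ℝ) (h : IsFractalString ℓ) {x : ℝ} (hx : 0 < x) :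
    phiNu ℓ x = ∑' j, (ℓ j * x - ⌊ℓ j * x⌋₊) := by
  have hsx : Summable (fun j => ℓ j * x) := h.2.2.mul_right x
  have hnn : ∀ j, (0:ℝ) ≤ ℓ j * x := fun j => mul_nonneg (h.1 j).le hx.le
  have hsf : Summable (fun j => ((⌊ℓ j * x⌋₊ : ℝ))) :=
    Summable.of_nonneg_of_le (fun j => by positivity) (fun j => Nat.floor_le (hnn j)) hsx
  unfold phiNu weylTerm spectralCount
  rw [← tsum_mul_right, ← Summable.tsum_sub hsx hsf]

lemma phi_div_tendsto (ℓ : ℕ → ℝ) (D C : ℝ) (hasymp : SpectralAsymp ℓ D C) :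
    Tendsto (fun x => phiNu ℓ x / x ^ D) atTop (𝓝 C) := by
  have h1 : Tendsto (fun x : ℝ => C - (spectralCount ℓ x - (weylTerm ℓ x - C * x ^ D)) / x ^ D)
      atTop (𝓝 (C - 0)) := tendsto_const_nhds.sub hasymp
  rw [sub_zero] at h1
  apply h1.congr'
  filter_upwards [eventually_gt_atTop 0] with x hx
  have hxD : (0:ℝ) < x ^ D := Real.rpow_pos_of_pos hx D
  unfold phiNu
  field_simp
  ring

lemma phi_bounds (ℓ : ℕ → ℝ) (h : IsFractalString ℓ) (D C : ℝ) (hC : C ≠ 0)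
    (hasymp : SpectralAsymp ℓ D C) :
    0 < C ∧ ∃ x₀ : ℝ, 1 ≤ x₀ ∧ ∀ x, x₀ ≤ x →
      C / 2 * x ^ D ≤ phiNu ℓ x ∧ phiNu ℓ x ≤ 2 * C * x ^ D := by
  have ht := phi_div_tendsto ℓ D C hasymp
  have hphinn : ∀ x : ℝ, 0 < x → 0 ≤ phiNu ℓ x := by
    intro x hx
    rw [phiNu_eq_tsum ℓ h hx]
    exact tsum_nonneg fun j => frac_nonneg' (mul_nonneg (h.1 j).le hx.le)
  have hC0 : 0 ≤ C := by
    refine ge_of_tendsto ht ?_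
    filter_upwards [eventually_gt_atTop (0:ℝ)] with x hx
    exact div_nonneg (hphinn x hx) (Real.rpow_pos_of_pos hx D).le
  have hCpos : 0 < C := lt_of_le_of_ne hC0 (Ne.symm hC)
  refine ⟨hCpos, ?_⟩
  have hball : ∀ᶠ x : ℝ in atTop, phiNu ℓ x / x ^ D ∈ Metric.ball C (C / 2) :=
    ht.eventually_mem (Metric.ball_mem_nhds C (half_pos hCpos))
  rw [eventually_atTop] at hball
  obtain ⟨x₁, hx₁⟩ := hball
  refine ⟨max x₁ 1, le_max_right _ _, fun x hx => ?_⟩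
  have hx1 : (1:ℝ) ≤ x := le_trans (le_max_right _ _) hx
  have hxpos : (0:ℝ) < x := lt_of_lt_of_le one_pos hx1
  have hxD : (0:ℝ) < x ^ D := Real.rpow_pos_of_pos hxpos D
  have hd := hx₁ x (le_trans (le_max_left _ _) hx)
  rw [Metric.mem_ball, Real.dist_eq, abs_sub_lt_iff] at hd
  have e : phiNu ℓ x = phiNu ℓ x / x ^ D * x ^ D := (div_mul_cancel₀ _ hxD.ne').symm
  constructor
  · rw [e]; nlinarith [hd.2]
  · rw [e]; nlinarith [hd.1]
lemma summable_min (ℓ : ℕ → ℝ) (h : IsFractalString ℓ) {ε : ℝ} (hε : 0 < ε) :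
    Summable fun j => min (ℓ j) (2 * ε) :=
  Summable.of_nonneg_of_le (fun j => le_min (h.1 j).le (by positivity))
    (fun j => min_le_left _ _) h.2.2

lemma summable_frac (ℓ : ℕ → ℝ) (h : IsFractalString ℓ) {x : ℝ} (hx : 0 < x) :
    Summable fun j => ℓ j * x - ⌊ℓ j * x⌋₊ :=
  Summable.of_nonneg_of_le (fun j => frac_nonneg' (mul_nonneg (h.1 j).le hx.le))
    (fun j => by have : (0:ℝ) ≤ ⌊ℓ j * x⌋₊ := Nat.cast_nonneg _; linarith)
    (h.2.2.mul_right x)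

lemma phi_le_vol (ℓ : ℕ → ℝ) (h : IsFractalString ℓ) {x : ℝ} (hx : 0 < x) :
    phiNu ℓ x ≤ x * stringVol ℓ (1 / (2 * x)) := by
  have hε : (0:ℝ) < 1 / (2 * x) := by positivity
  rw [phiNu_eq_tsum ℓ h hx, stringVol, ← tsum_mul_left]
  refine Summable.tsum_le_tsum ?_ (summable_frac ℓ h hx) ((summable_min ℓ h hε).mul_left x)
  intro j
  have key : x * min (ℓ j) (2 * (1 / (2 * x))) = min (ℓ j * x) 1 := by
    rw [mul_min_of_nonneg _ _ hx.le]
    congr 1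
    · ring
    · field_simp
  rw [key]
  exact le_min (by have : (0:ℝ) ≤ ⌊ℓ j * x⌋₊ := Nat.cast_nonneg _; linarith)
    (frac_le_one' _)

lemma tsum_ite_le_phi (ℓ : ℕ → ℝ) (h : IsFractalString ℓ) {s : ℝ} (hs : 0 < s) :
    (∑' j, if ℓ j ≤ s then ℓ j else 0) ≤ 2 * s * phiNu ℓ (1 / (2 * s)) := by
  set x : ℝ := 1 / (2 * s) with hxdef
  have hx : 0 < x := by positivity
  rw [phiNu_eq_tsum ℓ h hx, ← tsum_mul_left]
  refine Summable.tsum_le_tsum ?_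
    (Summable.of_nonneg_of_le (fun j => by split; exacts [(h.1 j).le, le_rfl])
      (fun j => by split <;> [exact le_rfl; exact (h.1 j).le]) h.2.2)
    ((summable_frac ℓ h hx).mul_left _)
  intro j
  split
  · next hj =>
    have h1 : ℓ j * x < 1 := by
      rw [hxdef]
      rw [mul_one_div, div_lt_one (by positivity)]
      nlinarith [h.1 j]
    have h0 : (⌊ℓ j * x⌋₊ : ℝ) = 0 := by
      rw [Nat.floor_eq_zero.mpr h1]; simp
    rw [h0, sub_zero, hxdef]
    field_simp
    exact le_rfl
  · have := frac_nonneg' (mul_nonneg (h.1 j).le hx.le)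
    positivity
lemma summable_ite (ℓ : ℕ → ℝ) (h : IsFractalString ℓ) (s : ℝ) :
    Summable fun j => if ℓ j ≤ s then ℓ j else 0 :=
  Summable.of_nonneg_of_le (fun j => by split; exacts [(h.1 j).le, le_rfl])
    (fun j => by split; exacts [le_rfl, (h.1 j).le]) h.2.2

lemma tsum_ite_global (ℓ : ℕ → ℝ) (h : IsFractalString ℓ) (D C : ℝ)
    (hD : D ∈ Set.Ioo (0:ℝ) 1) (hC : C ≠ 0) (hasymp : SpectralAsymp ℓ D C) :
    ∃ K : ℝ, 0 < K ∧ ∀ s : ℝ, 0 < s →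
      (∑' j, if ℓ j ≤ s then ℓ j else 0) ≤ K * s ^ (1 - D) := by
  obtain ⟨hCpos, x₀, hx₀1, hx₀⟩ := phi_bounds ℓ h D C hC hasymp
  have hx₀pos : 0 < x₀ := lt_of_lt_of_le one_pos hx₀1
  set s₀ : ℝ := 1 / (2 * x₀) with hs₀def
  have hs₀ : 0 < s₀ := by positivity
  set L : ℝ := ∑' j, ℓ j with hLdef
  have hL : 0 ≤ L := tsum_nonneg fun j => (h.1 j).le
  refine ⟨4 * C + L * s₀ ^ (D - 1), by positivity, fun s hs => ?_⟩
  have hKge : 4 * C ≤ 4 * C + L * s₀ ^ (D - 1) := by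
    have : 0 ≤ L * s₀ ^ (D - 1) := by positivity
    linarith
  have hs1D : 0 ≤ s ^ (1 - D) := (Real.rpow_pos_of_pos hs _).le
  rcases le_or_gt s s₀ with hss | hss
  · -- small s : use phi bound
    have hx : x₀ ≤ 1 / (2 * s) := by
      rw [le_div_iff₀ (by positivity)]
      rw [hs₀def, le_div_iff₀ (by positivity)] at hss
      nlinarith
    have h1 : (∑' j, if ℓ j ≤ s then ℓ j else 0) ≤ 2 * s * phiNu ℓ (1 / (2 * s)) :=
      tsum_ite_le_phi ℓ h hs
    have h2 : phiNu ℓ (1 / (2 * s)) ≤ 2 * C * (1 / (2 * s)) ^ D := (hx₀ _ hx).2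
    have h3 : 2 * s * phiNu ℓ (1 / (2 * s)) ≤ 2 * s * (2 * C * (1 / (2 * s)) ^ D) :=
      mul_le_mul_of_nonneg_left h2 (by positivity)
    have h4 : 2 * s * (2 * C * (1 / (2 * s)) ^ D) = 2 * C * (2 * s) ^ (1 - D) := by
      rw [Real.rpow_sub (by positivity), Real.rpow_one, one_div,
        Real.inv_rpow (by positivity)]
      field_simp
    have h5 : 2 * C * (2 * s) ^ (1 - D) ≤ 4 * C * s ^ (1 - D) := by
      rw [Real.mul_rpow (by norm_num) hs.le]
      have h2D : (2:ℝ) ^ (1 - D) ≤ 2 := by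
        calc (2:ℝ) ^ (1 - D) ≤ (2:ℝ) ^ (1:ℝ) :=
          Real.rpow_le_rpow_of_exponent_le one_le_two (by linarith [hD.1])
        _ = 2 := Real.rpow_one 2
      nlinarith [mul_le_mul_of_nonneg_left (mul_le_mul_of_nonneg_right h2D hs1D)
        (by positivity : (0:ℝ) ≤ 2 * C)]
    calc (∑' j, if ℓ j ≤ s then ℓ j else 0) ≤ 2 * s * (2 * C * (1 / (2 * s)) ^ D) :=
          le_trans h1 h3
      _ = 2 * C * (2 * s) ^ (1 - D) := h4
      _ ≤ 4 * C * s ^ (1 - D) := h5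
      _ ≤ (4 * C + L * s₀ ^ (D - 1)) * s ^ (1 - D) :=
          mul_le_mul_of_nonneg_right hKge hs1D
  · -- large s : use total sum
    have h1 : (∑' j, if ℓ j ≤ s then ℓ j else 0) ≤ L :=
      Summable.tsum_le_tsum (fun j => by split; exacts [le_rfl, (h.1 j).le])
        (summable_ite ℓ h s) h.2.2
    have hone : (1:ℝ) ≤ s₀ ^ (D - 1) * s ^ (1 - D) := by
      have e1 : s₀ ^ (D - 1) * s₀ ^ (1 - D) = 1 := by
        rw [← Real.rpow_add hs₀]; norm_num
      have e2 : s₀ ^ (1 - D) ≤ s ^ (1 - D) :=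
        Real.rpow_le_rpow hs₀.le hss.le (by linarith [hD.2])
      calc (1:ℝ) = s₀ ^ (D - 1) * s₀ ^ (1 - D) := e1.symm
        _ ≤ s₀ ^ (D - 1) * s ^ (1 - D) :=
            mul_le_mul_of_nonneg_left e2 (Real.rpow_pos_of_pos hs₀ _).le
    calc (∑' j, if ℓ j ≤ s then ℓ j else 0) ≤ L := h1
      _ = L * 1 := (mul_one L).symm
      _ ≤ L * (s₀ ^ (D - 1) * s ^ (1 - D)) := mul_le_mul_of_nonneg_left hone hL
      _ = L * s₀ ^ (D - 1) * s ^ (1 - D) := by ring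
      _ ≤ (4 * C + L * s₀ ^ (D - 1)) * s ^ (1 - D) := by nlinarith
lemma vol_upper (ℓ : ℕ → ℝ) (h : IsFractalString ℓ) (D C : ℝ)
    (hD : D ∈ Set.Ioo (0:ℝ) 1) (hC : C ≠ 0) (hasymp : SpectralAsymp ℓ D C) :
    ∃ M : ℝ, 0 < M ∧ ∀ ε : ℝ, 0 < ε → stringVol ℓ ε ≤ M * ε ^ (1 - D) := by
  obtain ⟨K, hK, hTle⟩ := tsum_ite_global ℓ h D C hD hC hasymp
  set r : ℝ := (2:ℝ) ^ (-D) with hrdef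
  have hr0 : 0 < r := Real.rpow_pos_of_pos two_pos _
  have hr1 : r < 1 := Real.rpow_lt_one_of_one_lt_of_neg one_lt_two (by linarith [hD.1])
  have h4pos : (0:ℝ) < (4:ℝ) ^ (1 - D) := Real.rpow_pos_of_pos (by norm_num) _
  refine ⟨K * 4 ^ (1 - D) * (1 - r)⁻¹,
    mul_pos (mul_pos hK h4pos) (inv_pos.mpr (by linarith)), fun ε hε => ?_⟩
  set f : ℕ → ℕ → ℝ :=
    fun j k => (2:ℝ)⁻¹ ^ k * (if ℓ j ≤ 2 ^ (k+1) * (2 * ε) then ℓ j else 0) with hfdef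
  have hgeom : Summable fun k : ℕ => ((2:ℝ)⁻¹) ^ k :=
    summable_geometric_of_lt_one (by norm_num) (by norm_num)
  have hf_nonneg : ∀ j k, 0 ≤ f j k := fun j k => by
    have : (0:ℝ) ≤ if ℓ j ≤ 2 ^ (k+1) * (2 * ε) then ℓ j else 0 := by
      split; exacts [(h.1 j).le, le_rfl]
    exact mul_nonneg (by positivity) this
  have hf_le : ∀ j k, f j k ≤ (2:ℝ)⁻¹ ^ k * ℓ j := fun j k => by
    refine mul_le_mul_of_nonneg_left ?_ (by positivity)
    split; exacts [le_rfl, (h.1 j).le]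
  have hfj : ∀ j, Summable (f j) := fun j =>
    Summable.of_nonneg_of_le (hf_nonneg j) (hf_le j) (hgeom.mul_right _)
  -- pointwise dyadic bound
  have hpt : ∀ j, min (ℓ j) (2 * ε) ≤ ∑' k, f j k := by
    intro j
    have hex : ∃ k, ℓ j ≤ 2 ^ (k+1) * (2 * ε) := by
      obtain ⟨n, hn⟩ := pow_unbounded_of_one_lt (ℓ j / (2 * ε)) (one_lt_two (α := ℝ))
      refine ⟨n, ?_⟩
      rw [div_lt_iff₀ (by positivity)] at hn
      have h2n : (2:ℝ)^n ≤ 2^(n+1) := by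
        rw [pow_succ]; nlinarith [pow_pos (two_pos (α := ℝ)) n]
      nlinarith [pow_pos (two_pos (α := ℝ)) n]
    have hterm : min (ℓ j) (2 * ε) ≤ f j (Nat.find hex) := by
      have hspec := Nat.find_spec hex
      rcases Nat.eq_zero_or_pos (Nat.find hex) with hm | hm
      · rw [hfdef]
        simp only
        rw [hm] at hspec ⊢
        rw [pow_zero, one_mul, if_pos hspec]
        exact min_le_left _ _
      · obtain ⟨m', hm'⟩ := Nat.exists_eq_succ_of_ne_zero hm.ne'
        have hmin : ¬ (ℓ j ≤ 2 ^ (m'+1) * (2 * ε)) :=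
          Nat.find_min hex (by omega)
        push_neg at hmin
        have hfe : f j (Nat.find hex) = (2:ℝ)⁻¹ ^ (Nat.find hex) * ℓ j := by
          rw [hfdef]; simp only; rw [if_pos hspec]
        rw [hfe, hm']
        have hkey : 2 * ε ≤ (2:ℝ)⁻¹ ^ (m'+1) * ℓ j := by
          have hc : (2:ℝ)⁻¹ ^ (m'+1) * (2 ^ (m'+1) * (2*ε)) = 2*ε := by
            rw [← mul_assoc, inv_pow, inv_mul_cancel₀ (by positivity)]
            ring
          nlinarith [pow_pos (inv_pos.mpr (two_pos (α := ℝ))) (m'+1)]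
        exact le_trans (min_le_right _ _) hkey
    exact le_trans hterm (Summable.le_tsum (hfj j) _ (fun k _ => hf_nonneg j k))
  -- summability for swap
  have huncur : Summable (Function.uncurry f) := by
    refine Summable.of_nonneg_of_le (fun p => hf_nonneg p.1 p.2)
      (fun p => hf_le p.1 p.2) ?_
    have hs := Summable.mul_of_nonneg h.2.2 hgeom
      (fun j => (h.1 j).le) (fun k => by positivity)
    refine hs.congr fun p => ?_
    exact mul_comm _ _
  have hswap : ∑' j, ∑' k, f j k = ∑' k, ∑' j, f j k := (Summable.tsum_comm huncur).symm
  -- outer summability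
  have houter_le : ∀ j, ∑' k, f j k ≤ 2 * ℓ j := by
    intro j
    have : ∑' k, f j k ≤ ∑' k : ℕ, (2:ℝ)⁻¹ ^ k * ℓ j :=
      Summable.tsum_le_tsum (hf_le j) (hfj j) (hgeom.mul_right _)
    rw [tsum_mul_right, tsum_geometric_of_lt_one (by norm_num) (by norm_num),
      show ((1:ℝ) - 2⁻¹)⁻¹ = 2 by norm_num] at this
    linarith
  have houter : Summable fun j => ∑' k, f j k :=
    Summable.of_nonneg_of_le (fun j => tsum_nonneg (hf_nonneg j)) houter_le
      (h.2.2.mul_left 2)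
  -- the k-sums
  have hinner : ∀ k : ℕ, ∑' j, f j k
      = (2:ℝ)⁻¹ ^ k * ∑' j, (if ℓ j ≤ 2 ^ (k+1) * (2 * ε) then ℓ j else 0) := by
    intro k; rw [hfdef]; exact tsum_mul_left
  have hcomp : ∀ k : ℕ, (2:ℝ)⁻¹ ^ k * (K * ((2:ℝ) ^ (k+1) * (2 * ε)) ^ (1 - D))
      = K * (4 * ε) ^ (1 - D) * r ^ k := by
    intro k
    have e1 : (2:ℝ)^(k+1)*(2*ε) = 2^k * (4*ε) := by ring
    rw [e1, Real.mul_rpow (by positivity) (by positivity)]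
    have e2 : ((2:ℝ)^k) ^ (1-D) = ((2:ℝ) ^ (1-D)) ^ k := by
      rw [← Real.rpow_natCast (2:ℝ) k, ← Real.rpow_mul (by norm_num), mul_comm,
        Real.rpow_mul (by norm_num), Real.rpow_natCast]
    have e3 : (2:ℝ)⁻¹ ^ k * ((2:ℝ) ^ (1-D)) ^ k = r ^ k := by
      rw [← mul_pow]
      congr 1
      rw [show ((2:ℝ)⁻¹) = (2:ℝ)^(-1:ℝ) from (Real.rpow_neg_one 2).symm,
        ← Real.rpow_add two_pos, hrdef]
      congr 1
      ring
    calc (2:ℝ)⁻¹ ^ k * (K * (((2:ℝ)^k) ^ (1-D) * (4*ε) ^ (1-D)))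
        = K * (4*ε) ^ (1-D) * ((2:ℝ)⁻¹ ^ k * ((2:ℝ)^k) ^ (1-D)) := by ring
      _ = K * (4*ε) ^ (1-D) * r ^ k := by rw [e2, e3]
  -- bound fn summable
  have hbdd_sum : Summable fun k : ℕ => K * (4 * ε) ^ (1 - D) * r ^ k :=
    (summable_geometric_of_lt_one hr0.le hr1).mul_left _
  have hstep : ∀ k : ℕ, ∑' j, f j k ≤ K * (4 * ε) ^ (1 - D) * r ^ k := by
    intro k
    rw [hinner k, ← hcomp k]
    exact mul_le_mul_of_nonneg_left (hTle _ (by positivity)) (by positivity)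
  have hmid_sum : Summable fun k : ℕ => ∑' j, f j k :=
    Summable.of_nonneg_of_le (fun k => tsum_nonneg fun j => hf_nonneg j k) hstep hbdd_sum
  calc stringVol ℓ ε = ∑' j, min (ℓ j) (2 * ε) := rfl
    _ ≤ ∑' j, ∑' k, f j k := Summable.tsum_le_tsum hpt (summable_min ℓ h hε) houter
    _ = ∑' k, ∑' j, f j k := hswap
    _ ≤ ∑' k : ℕ, K * (4 * ε) ^ (1 - D) * r ^ k := Summable.tsum_le_tsum hstep hmid_sum hbdd_sum
    _ = K * (4 * ε) ^ (1 - D) * (1 - r)⁻¹ := by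
        rw [tsum_mul_left, tsum_geometric_of_lt_one hr0.le hr1]
    _ = K * 4 ^ (1 - D) * (1 - r)⁻¹ * ε ^ (1 - D) := by
        rw [Real.mul_rpow (by norm_num) hε.le]
        ring
lemma vol_lower (ℓ : ℕ → ℝ) (h : IsFractalString ℓ) (D C : ℝ)
    (hD : D ∈ Set.Ioo (0:ℝ) 1) (hC : C ≠ 0) (hasymp : SpectralAsymp ℓ D C) :
    ∃ c ε₀ : ℝ, 0 < c ∧ 0 < ε₀ ∧ ∀ ε : ℝ, 0 < ε → ε ≤ ε₀ →
      c * ε ^ (1 - D) ≤ stringVol ℓ ε := by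
  obtain ⟨hCpos, x₀, hx₀1, hx₀⟩ := phi_bounds ℓ h D C hC hasymp
  have hx₀pos : 0 < x₀ := lt_of_lt_of_le one_pos hx₀1
  have h2Dpos : (0:ℝ) < (2:ℝ) ^ (-D) := Real.rpow_pos_of_pos two_pos _
  refine ⟨C * 2 ^ (-D), 1/(2*x₀), by positivity, by positivity, fun ε hε hεle => ?_⟩
  set x : ℝ := 1/(2*ε) with hxdef
  have hx : 0 < x := by positivity
  have hxx₀ : x₀ ≤ x := by
    rw [hxdef, le_div_iff₀ (by positivity)]
    rw [le_div_iff₀ (by positivity)] at hεle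
    nlinarith
  have hphi := (hx₀ x hxx₀).1
  have hvol := phi_le_vol ℓ h hx
  have hback : 1/(2*x) = ε := by rw [hxdef]; field_simp
  rw [hback] at hvol
  have hVlow : C/2 * x ^ D ≤ x * stringVol ℓ ε := le_trans hphi hvol
  have hdiv : C/2 * x ^ D / x ≤ stringVol ℓ ε := by
    rw [div_le_iff₀ hx]
    linarith
  refine le_trans (le_of_eq ?_) hdiv
  have e1 : ε ^ (1-D) = ε / ε ^ D := by rw [Real.rpow_sub hε, Real.rpow_one]
  have exD : x ^ D = ((2*ε) ^ D)⁻¹ := by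
    rw [hxdef, one_div, Real.inv_rpow (by positivity)]
  have h2eD : (2*ε:ℝ) ^ D = 2 ^ D * ε ^ D := Real.mul_rpow (by norm_num) hε.le
  have hεD : (0:ℝ) < ε ^ D := Real.rpow_pos_of_pos hε D
  have h2D : (0:ℝ) < (2:ℝ) ^ D := Real.rpow_pos_of_pos two_pos D
  have e2 : (2:ℝ)^(-D) = ((2:ℝ)^D)⁻¹ := Real.rpow_neg (by norm_num) D
  rw [exD, h2eD, e1, e2, hxdef]
  field_simp
/-- (Lapidus–Pomerance) If a fractal string satisfies
`N_ν(x) = W(x) - C x^D + o(x^D)` for some nonzero real `C` and some `D ∈ (0,1)`,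
then it is Minkowski nondegenerate of dimension `D`:
`0 < M_{*,D} ≤ M*_D < ∞` and its Minkowski dimension equals `D`. -/
theorem spectralAsymp_implies_nondegenerate (ℓ : ℕ → ℝ) (h : IsFractalString ℓ)
    (D : ℝ) (hD : D ∈ Set.Ioo (0:ℝ) 1) (C : ℝ) (hC : C ≠ 0)
    (hasymp : SpectralAsymp ℓ D C) :
    0 < lowerContent ℓ D ∧ upperContent ℓ D < ⊤ ∧ minkDim ℓ = D := by
  obtain ⟨M, hM, hup⟩ := vol_upper ℓ h D C hD hC hasymp
  obtain ⟨c, ε₀, hc, hε₀, hlow⟩ := vol_lower ℓ h D C hD hC hasymp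
  have hmemIoc : Set.Ioc (0:ℝ) ε₀ ∈ 𝓝[>] (0:ℝ) :=
    Ioc_mem_nhdsGT_of_mem ⟨le_refl 0, hε₀⟩
  have hmemIoc1 : Set.Ioc (0:ℝ) 1 ∈ 𝓝[>] (0:ℝ) :=
    Ioc_mem_nhdsGT_of_mem ⟨le_refl 0, one_pos⟩
  have hlower : 0 < lowerContent ℓ D := by
    have hev : ∀ᶠ ε in 𝓝[>] (0:ℝ),
        ENNReal.ofReal c ≤ ENNReal.ofReal (stringVol ℓ ε / ε ^ (1-D)) := by
      filter_upwards [hmemIoc] with ε hεm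
      apply ENNReal.ofReal_le_ofReal
      rw [le_div_iff₀ (Real.rpow_pos_of_pos hεm.1 _)]
      exact hlow ε hεm.1 hεm.2
    have hll := liminf_le_liminf hev
    rw [liminf_const] at hll
    calc (0:ENNReal) < ENNReal.ofReal c := ENNReal.ofReal_pos.mpr hc
      _ ≤ lowerContent ℓ D := hll
  have hupfin : ∀ d : ℝ, D ≤ d → upperContent ℓ d ≤ ENNReal.ofReal M := by
    intro d hd
    have hev : ∀ᶠ ε in 𝓝[>] (0:ℝ),
        ENNReal.ofReal (stringVol ℓ ε / ε ^ (1-d)) ≤ ENNReal.ofReal M := by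
      filter_upwards [hmemIoc1] with ε hεm
      apply ENNReal.ofReal_le_ofReal
      rw [div_le_iff₀ (Real.rpow_pos_of_pos hεm.1 _)]
      calc stringVol ℓ ε ≤ M * ε ^ (1-D) := hup ε hεm.1
        _ ≤ M * ε ^ (1-d) := mul_le_mul_of_nonneg_left
            (Real.rpow_le_rpow_of_exponent_ge hεm.1 hεm.2 (by linarith)) hM.le
    have hls := limsup_le_limsup hev
    rwa [limsup_const] at hls
  have hupD : upperContent ℓ D < ⊤ :=
    lt_of_le_of_lt (hupfin D le_rfl) ENNReal.ofReal_lt_top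
  refine ⟨hlower, hupD, ?_⟩
  have hset : {d : ℝ | 0 ≤ d ∧ upperContent ℓ d < ⊤} = Set.Ici D := by
    ext d
    simp only [Set.mem_setOf_eq, Set.mem_Ici]
    constructor
    · rintro ⟨hd0, hdfin⟩
      by_contra hdD
      push_neg at hdD
      have htend : Tendsto (fun ε : ℝ => ENNReal.ofReal (c * ε ^ (d - D)))
          (𝓝[>] (0:ℝ)) (𝓝 ⊤) := by
        apply ENNReal.tendsto_ofReal_atTop.comp
        apply Tendsto.const_mul_atTop hc
        have h1 : Tendsto (fun ε : ℝ => (ε⁻¹) ^ (D - d)) (𝓝[>] (0:ℝ)) atTop :=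
          (tendsto_rpow_atTop (by linarith)).comp tendsto_inv_nhdsGT_zero
        apply h1.congr'
        filter_upwards [self_mem_nhdsWithin] with ε (hεm : ε ∈ Set.Ioi (0:ℝ))
        rw [Real.inv_rpow (le_of_lt hεm), ← Real.rpow_neg (le_of_lt hεm)]
        congr 1
        ring
      have hevtop : ∀ᶠ ε in 𝓝[>] (0:ℝ), ENNReal.ofReal (c * ε ^ (d-D))
          ≤ ENNReal.ofReal (stringVol ℓ ε / ε ^ (1-d)) := by
        filter_upwards [hmemIoc] with ε hεm
        apply ENNReal.ofReal_le_ofReal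
        rw [le_div_iff₀ (Real.rpow_pos_of_pos hεm.1 _)]
        have e : c * ε ^ (d-D) * ε ^ (1-d) = c * ε ^ (1-D) := by
          rw [mul_assoc, ← Real.rpow_add hεm.1,
            show (d-D) + (1-d) = 1-D by ring]
        rw [e]
        exact hlow ε hεm.1 hεm.2
      have hls := limsup_le_limsup hevtop
      rw [htend.limsup_eq] at hls
      have : upperContent ℓ d = ⊤ := top_le_iff.mp hls
      rw [this] at hdfin
      exact lt_irrefl _ hdfin
    · intro hd
      exact ⟨le_trans hD.1.le hd,
        lt_of_le_of_lt (hupfin d hd) ENNReal.ofReal_lt_top⟩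
  rw [minkDim, hset, csInf_Ici]
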